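/- Let ω ≥ 1 be a natural number and let M > 0 and q > 0 be real numbers. Define σ(n) = q·√(((n − M)/M)·((2M − n)/(2M))^ω) for n ∈ [M, 2M]. Then for all n ∈ [M, 2M], σ(n) ≤ q·√((1/(1 + ω))·(ω/(2·(1 + ω)))^ω), and this maximum is attained at n = ((2 + ω)/(1 + ω))·M. -/

import Mathlib

lemma key_ineq (ω : ℕ) (hω : 1 ≤ ω) (t : ℝ) (ht0 : 0 ≤ t) (ht1 : t ≤ 1) :
    t * (1 - t) ^ ω ≤ 1 / (1 + ω) * ((ω : ℝ) / (1 + ω)) ^ ω := by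
  set c : ℝ := 1 + ω with hc
  have hcpos : 0 < c := by positivity
  have hωpos : (0 : ℝ) < ω := by exact_mod_cast hω
  have h1t : 0 ≤ 1 - t := by linarith
  set p₁ : ℝ := c * t with hp₁
  set p₂ : ℝ := c * (1 - t) / ω with hp₂
  have hp₁0 : 0 ≤ p₁ := by positivity
  have hp₂0 : 0 ≤ p₂ := by positivity
  have hsum : 1 / c + (ω : ℝ) / c = 1 := by field_simp; exact hc.symm
  have h := Real.geom_mean_le_arith_mean2_weighted (by positivity : (0:ℝ) ≤ 1/c)
    (by positivity : (0:ℝ) ≤ (ω:ℝ)/c) hp₁0 hp₂0 hsum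
  have harith : 1 / c * p₁ + (ω : ℝ) / c * p₂ = 1 := by
    rw [hp₁, hp₂]; field_simp; ring
  rw [harith] at h
  -- raise to power c
  have h2 : p₁ * p₂ ^ ω ≤ 1 := by
    have hpow := Real.rpow_le_one (by positivity) h hcpos.le
    rw [Real.mul_rpow (by positivity) (by positivity),
      ← Real.rpow_mul hp₁0, ← Real.rpow_mul hp₂0,
      one_div_mul_cancel hcpos.ne', Real.rpow_one, div_mul_cancel₀ _ hcpos.ne',
      Real.rpow_natCast] at hpow
    exact hpow
  have hfac : p₂ ^ ω = c ^ ω * (1 - t) ^ ω / (ω : ℝ) ^ ω := by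
    rw [hp₂, div_pow, mul_pow]
  have hid : 1 / c * ((ω : ℝ) / c) ^ ω * (p₁ * p₂ ^ ω) = t * (1 - t) ^ ω := by
    rw [hp₁, hfac, div_pow]
    field_simp
  calc t * (1 - t) ^ ω = 1 / c * ((ω : ℝ) / c) ^ ω * (p₁ * p₂ ^ ω) := hid.symm
    _ ≤ 1 / c * ((ω : ℝ) / c) ^ ω * 1 := by
        apply mul_le_mul_of_nonneg_left h2 (by positivity)
    _ = 1 / c * ((ω : ℝ) / c) ^ ω := mul_one _

theorem sigma_max (ω : ℕ) (hω : 1 ≤ ω) (M q : ℝ) (hM : 0 < M) (hq : 0 < q) :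
    (∀ n ∈ Set.Icc M (2 * M),
      q * Real.sqrt ((n - M) / M * ((2 * M - n) / (2 * M)) ^ ω)
        ≤ q * Real.sqrt (1 / (1 + ω) * ((ω : ℝ) / (2 * (1 + ω))) ^ ω)) ∧
    q * Real.sqrt (((2 + ω) / (1 + ω) * M - M) / M
          * ((2 * M - (2 + ω) / (1 + ω) * M) / (2 * M)) ^ ω)
      = q * Real.sqrt (1 / (1 + ω) * ((ω : ℝ) / (2 * (1 + ω))) ^ ω) := by
  have hc : (0:ℝ) < 1 + ω := by positivity
  constructor
  · intro n hn
    obtain ⟨hn1, hn2⟩ := hn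
    apply mul_le_mul_of_nonneg_left _ hq.le
    apply Real.sqrt_le_sqrt
    set t : ℝ := (n - M) / M with htdef
    have ht0 : 0 ≤ t := div_nonneg (by linarith) hM.le
    have ht1 : t ≤ 1 := by rw [htdef, div_le_one hM]; linarith
    have hA : (2 * M - n) / (2 * M) = (1 - t) / 2 := by
      rw [htdef]; field_simp; ring
    have hB : 1 / (1 + (ω:ℝ)) * ((ω : ℝ) / (2 * (1 + ω))) ^ ω
        = 1 / (1 + ω) * ((ω : ℝ) / (1 + ω)) ^ ω / 2 ^ ω := by
      rw [mul_div_assoc, div_pow, div_pow, mul_pow]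
      ring
    rw [hA, hB]
    have hk := key_ineq ω hω t ht0 ht1
    calc t * ((1 - t) / 2) ^ ω = t * (1 - t) ^ ω / 2 ^ ω := by rw [div_pow]; ring
      _ ≤ 1 / (1 + ω) * ((ω : ℝ) / (1 + ω)) ^ ω / 2 ^ ω :=
          div_le_div_of_nonneg_right hk (by positivity)
  · have h1 : ((2 + (ω:ℝ)) / (1 + ω) * M - M) / M = 1 / (1 + ω) := by
      field_simp; ring
    have h2 : (2 * M - (2 + (ω:ℝ)) / (1 + ω) * M) / (2 * M) = (ω:ℝ) / (2 * (1 + ω)) := by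
      field_simp; ring
    rw [h1, h2]
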